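/- Let A₁, …, A_m be n×n real matrices, u, v ∈ ℝ^m, and let K = L Lᵗ for an n×n real matrix L. Set P = I + (v ⊗ L)ᵗ · bdiag(A₁⁻¹, …, A_m⁻¹) · (u ⊗ L), assuming each Aᵢ is invertible. Then det( bdiag(A₁, …, A_m) + (u vᵗ) ⊗ K ) = (∏ᵢ det Aᵢ) · det P. -/

import Mathlib

open Matrix Kronecker

/-- Block-diagonal matrix with `n × n` diagonal blocks `D 0, …, D (m-1)`. -/
noncomputable def bdiag {n m : ℕ} (D : Fin m → Matrix (Fin n) (Fin n) ℝ) :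
    Matrix (Fin m × Fin n) (Fin m × Fin n) ℝ :=
  Matrix.of fun p q => if p.1 = q.1 then D p.1 p.2 q.2 else 0

lemma bdiag_eq {n m : ℕ} (D : Fin m → Matrix (Fin n) (Fin n) ℝ) :
    bdiag D = (Matrix.blockDiagonal D).submatrix (Equiv.prodComm (Fin m) (Fin n))
      (Equiv.prodComm (Fin m) (Fin n)) := by
  ext p q
  simp [bdiag, Matrix.blockDiagonal, eq_comm]

lemma bdiag_mul {n m : ℕ} (D E : Fin m → Matrix (Fin n) (Fin n) ℝ) :
    bdiag D * bdiag E = bdiag (fun i => D i * E i) := by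
  rw [bdiag_eq, bdiag_eq, bdiag_eq, Matrix.submatrix_mul_equiv,
    Matrix.blockDiagonal_mul]

lemma bdiag_one {n m : ℕ} : bdiag (fun _ : Fin m => (1 : Matrix (Fin n) (Fin n) ℝ)) = 1 := by
  rw [bdiag_eq, show (fun _ : Fin m => (1 : Matrix (Fin n) (Fin n) ℝ)) = 1 from rfl,
    Matrix.blockDiagonal_one, Matrix.submatrix_one_equiv]

lemma bdiag_det {n m : ℕ} (D : Fin m → Matrix (Fin n) (Fin n) ℝ) :
    (bdiag D).det = ∏ i, (D i).det := by
  rw [bdiag_eq, Matrix.det_submatrix_equiv_self, Matrix.det_blockDiagonal]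

/-- Determinant of a quasi-Kronecker matrix: if each `Aᵢ` is invertible, `K = L Lᵗ`,
and `P = I + (v ⊗ L)ᵗ · bdiag(Aᵢ⁻¹) · (u ⊗ L)`, then
`det(bdiag(A₁,…,A_m) + (u vᵗ) ⊗ K) = (∏ᵢ det Aᵢ) · det P`. -/
theorem QK_det (n m : ℕ) (A : Fin m → Matrix (Fin n) (Fin n) ℝ)
    (hA : ∀ i, IsUnit (A i).det)
    (u v : Fin m → ℝ) (L K : Matrix (Fin n) (Fin n) ℝ) (hK : K = L * Lᵀ)
    (P : Matrix (Unit × Fin n) (Unit × Fin n) ℝ)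
    (hP : P = 1 + ((Matrix.replicateCol Unit v) ⊗ₖ L)ᵀ * bdiag (fun i => (A i)⁻¹) *
      ((Matrix.replicateCol Unit u) ⊗ₖ L)) :
    (bdiag A + (Matrix.vecMulVec u v) ⊗ₖ K).det = (∏ i, (A i).det) * P.det := by
  set B := bdiag A
  set B' := bdiag (fun i => (A i)⁻¹)
  let M := (Matrix.replicateCol Unit u) ⊗ₖ L
  let N := ((Matrix.replicateCol Unit v) ⊗ₖ L)ᵀ
  have hBB' : B * B' = 1 := by
    rw [bdiag_mul]
    have : (fun i => A i * (A i)⁻¹) = fun _ : Fin m => (1 : Matrix (Fin n) (Fin n) ℝ) := by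
      funext i
      exact Matrix.mul_nonsing_inv _ (hA i)
    rw [this, bdiag_one]
  have hMN : (Matrix.vecMulVec u v) ⊗ₖ K = M * N := by
    rw [hK, Matrix.vecMulVec_eq Unit,
      show N = (Matrix.replicateRow Unit v) ⊗ₖ Lᵀ from by
        rw [show N = ((Matrix.replicateCol Unit v) ⊗ₖ L)ᵀ from rfl, ← Matrix.kroneckerMap_transpose,
          Matrix.transpose_replicateCol],
      ← Matrix.mul_kronecker_mul]
  have key : B + (Matrix.vecMulVec u v) ⊗ₖ K = B * (1 + (B' * M) * N) := by
    rw [hMN, Matrix.mul_add, Matrix.mul_one, ← Matrix.mul_assoc, ← Matrix.mul_assoc,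
      hBB', Matrix.one_mul]
  rw [key, Matrix.det_mul, Matrix.det_one_add_mul_comm, bdiag_det]
  congr 1
  rw [hP, Matrix.mul_assoc]
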